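/- arXiv:0903.0411 — 4 statements merged into one kernel-verified Lean document; each statement's English description precedes it below -/
import Mathlib

section
/- Let p be a prime and let μ = (μ_1, …, μ_m) be a composition of n = dp + r (0 ≤ r < p), with μ_i = u_i p + s_i where 0 ≤ s_i < p. The number of ordered set-partitions (A_1, …, A_m) of {1, …, n} with |A_i| = μ_i such that each block I_j = {(j-1)p+1, …, jp} for 1 ≤ j ≤ s is contained in some A_i, equals ∑_{(c_1,…,c_m)} [s! / ∏ c_i!] · [((d-s)p + r)! / ∏ (μ_i - c_i p)!], where the sum runs over tuples of nonnegative integers with c_i ≤ u_i for all i and ∑ c_i = s. -/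
open Finset

lemma nat_card_filter {α : Type*} [Fintype α] (p : α → Prop) [DecidablePred p] :
    Nat.card {x // p x} = (Finset.univ.filter p).card := by
  rw [Nat.card_eq_fintype_card, Fintype.card_subtype]

lemma nat_card_sigma {ι : Type*} [Fintype ι] (G : ι → Type*) [∀ i, Finite (G i)] :
    Nat.card (Σ i, G i) = ∑ i, Nat.card (G i) := by
  letI : ∀ i, Fintype (G i) := fun i => Fintype.ofFinite _
  simp [Nat.card_eq_fintype_card]

lemma multinomial_map {α β : Type*} [DecidableEq α] [DecidableEq β] (s : Finset α) (e : α ↪ β) (f : β → ℕ) :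
    Nat.multinomial (s.map e) f = Nat.multinomial s (f ∘ e) := by
  simp [Nat.multinomial, Finset.sum_map, Finset.prod_map, Function.comp]

lemma multinomial_fin_succ {m : ℕ} (μ : Fin (m+1) → ℕ) :
    Nat.multinomial Finset.univ μ
      = (∑ i, μ i).choose (μ 0) * Nat.multinomial Finset.univ (μ ∘ Fin.succ) := by
  rw [Fin.univ_succ, Nat.multinomial_cons, multinomial_map, Finset.sum_cons, Finset.sum_map]
  rfl
lemma stepCard {m : ℕ} {α : Type} [Fintype α] [DecidableEq α] (μ : Fin (m+1) → ℕ)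
    (A : Finset α) (hA : A.card = μ 0) :
    Nat.card {F : {f : α → Fin (m+1) // ∀ i, Nat.card {x // f x = i} = μ i} //
        Finset.univ.filter (fun x => F.1 x = 0) = A}
      = Nat.card {g : {x : α // x ∉ A} → Fin m //
          ∀ i, Nat.card {y // g y = i} = μ i.succ} := by
  classical
  have hne : ∀ (f : α → Fin (m+1)), Finset.univ.filter (fun x => f x = 0) = A →
      ∀ x : {x : α // x ∉ A}, f x.1 ≠ 0 := by
    intro f hf x h0
    apply x.2
    have hm : x.1 ∈ Finset.univ.filter (fun x => f x = 0) :=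
      Finset.mem_filter.mpr ⟨Finset.mem_univ _, h0⟩
    rwa [hf] at hm
  have hmemA : ∀ (f : α → Fin (m+1)), Finset.univ.filter (fun x => f x = 0) = A →
      ∀ x : α, x ∈ A → f x = 0 := by
    intro f hf x hx
    rw [← hf] at hx
    exact (Finset.mem_filter.mp hx).2
  -- backward function
  have hfwd : ∀ (F : {f : α → Fin (m+1) // ∀ i, Nat.card {x // f x = i} = μ i})
      (hF : Finset.univ.filter (fun x => F.1 x = 0) = A) (i : Fin m),
      Nat.card {y : {x : α // x ∉ A} // (F.1 y.1).pred (hne F.1 hF y) = i} = μ i.succ := by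
    intro F hF i
    rw [← F.2 i.succ]
    apply Nat.card_congr
    refine ⟨fun y => ⟨y.1.1, ?_⟩, fun x => ⟨⟨x.1, ?_⟩, ?_⟩, ?_, ?_⟩
    · have := congrArg Fin.succ y.2
      rwa [Fin.succ_pred] at this
    · intro hx
      have := hmemA F.1 hF x.1 hx
      rw [x.2] at this
      exact Fin.succ_ne_zero i this
    · apply Fin.succ_injective
      rw [Fin.succ_pred, x.2]
    · intro y; exact Subtype.ext (Subtype.ext rfl)
    · intro x; exact Subtype.ext rfl
  apply Nat.card_congr
  refine ⟨fun F => ⟨fun x => (F.1.1 x.1).pred (hne F.1.1 F.2 x), hfwd F.1 F.2⟩,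
    fun G => ⟨⟨fun x => if h : x ∈ A then 0 else (G.1 ⟨x, h⟩).succ, ?_⟩, ?_⟩, ?_, ?_⟩
  · -- fiber sizes of backward function
    intro i
    induction i using Fin.cases with
    | zero =>
      rw [show Nat.card {x : α // (if h : x ∈ A then 0 else (G.1 ⟨x, h⟩).succ) = 0}
          = Nat.card {x : α // x ∈ A} from Nat.card_congr (Equiv.subtypeEquivRight (by
            intro x
            constructor
            · intro hx
              by_contra hmem
              simp only [dif_neg hmem] at hx
              exact Fin.succ_ne_zero _ hx
            · intro hx; simp only [dif_pos hx])), ← hA]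
      rw [Nat.card_eq_fintype_card]
      exact Fintype.card_coe A
    | succ i =>
      rw [← G.2 i]
      apply Nat.card_congr
      refine ⟨fun x => ⟨⟨x.1, ?_⟩, ?_⟩, fun y => ⟨y.1.1, ?_⟩, ?_, ?_⟩
      · intro hmem
        have := x.2
        simp only [dif_pos hmem] at this
        exact Fin.succ_ne_zero i this.symm
      · have := x.2
        simp only [dif_neg (show x.1 ∉ A from fun hmem => by
          have h2 := x.2
          simp only [dif_pos hmem] at h2
          exact Fin.succ_ne_zero i h2.symm)] at this
        exact Fin.succ_injective _ this
      · simp only [dif_neg y.1.2]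
        exact congrArg Fin.succ y.2
      · intro x; exact Subtype.ext rfl
      · intro y; exact Subtype.ext (Subtype.ext rfl)
  · -- filter = A
    ext x
    simp only [Finset.mem_filter, Finset.mem_univ, true_and]
    constructor
    · intro hx
      by_contra hmem
      simp only [dif_neg hmem] at hx
      exact Fin.succ_ne_zero _ hx
    · intro hx; simp only [dif_pos hx]
  · -- left inverse
    intro F
    apply Subtype.ext; apply Subtype.ext; funext x
    show (if h : x ∈ A then 0 else _) = F.1.1 x
    by_cases h : x ∈ A
    · rw [dif_pos h]
      exact (hmemA F.1.1 F.2 x h).symm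
    · rw [dif_neg h, Fin.succ_pred]
  · -- right inverse
    intro G
    apply Subtype.ext; funext x
    apply Fin.succ_injective
    rw [Fin.succ_pred]
    show (if h : x.1 ∈ A then 0 else _) = _
    rw [dif_neg x.2]
lemma countA : ∀ (m : ℕ) (α : Type) [Fintype α] [DecidableEq α] (μ : Fin m → ℕ),
    (∑ i, μ i) = Fintype.card α →
    Nat.card {f : α → Fin m // ∀ i, Nat.card {x // f x = i} = μ i}
      = Nat.multinomial Finset.univ μ := by
  intro m
  induction m with
  | zero =>
    intro α _ _ μ hμ
    haveI : IsEmpty α := Fintype.card_eq_zero_iff.mp (by simpa using hμ.symm)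
    rw [Nat.card_congr (Equiv.subtypeUnivEquiv (fun f i => i.elim0))]
    simp [Nat.card_eq_fintype_card]
  | succ m IH =>
    intro α _ _ μ hμ
    classical
    rw [Nat.card_congr (Equiv.sigmaFiberEquiv
      (fun f : {f : α → Fin (m+1) // ∀ i, Nat.card {x // f x = i} = μ i} =>
        Finset.univ.filter (fun x => f.1 x = 0))).symm, nat_card_sigma]
    have hval : ∀ A : Finset α,
        Nat.card {F : {f : α → Fin (m+1) // ∀ i, Nat.card {x // f x = i} = μ i} //
          Finset.univ.filter (fun x => F.1 x = 0) = A}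
        = if A.card = μ 0 then Nat.multinomial Finset.univ (μ ∘ Fin.succ) else 0 := by
      intro A
      by_cases hA : A.card = μ 0
      · rw [if_pos hA, stepCard μ A hA]
        apply IH
        have h1 : Fintype.card {x : α // x ∉ A} = Fintype.card α - A.card := by
          rw [← Fintype.card_coe A]
          exact Fintype.card_subtype_compl _
        rw [h1, hA, ← hμ, Fin.sum_univ_succ]
        simp
      · rw [if_neg hA]
        rw [Nat.card_eq_zero]
        left
        constructor
        intro F
        apply hA
        have h0 := F.1.2 0
        rw [nat_card_filter] at h0
        rw [← F.2]
        exact h0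
    rw [Finset.sum_congr rfl (fun A _ => hval A), Finset.sum_ite, Finset.sum_const,
      Finset.sum_const_zero, add_zero, smul_eq_mul]
    have hcard : (Finset.univ.filter (fun A : Finset α => A.card = μ 0)).card
        = (Fintype.card α).choose (μ 0) := by
      rw [← Fintype.card_subtype, Fintype.card_finset_len]
    rw [hcard, multinomial_fin_succ μ, hμ]
lemma blockCount {m : ℕ} {p s t n : ℕ} (hp0 : 0 < p) (hs0 : 0 < s) (htn : s * p + t = n)
    (f : Fin n → Fin m) (g : Fin s → Fin m) (h : Fin t → Fin m)
    (hg : ∀ (j : Fin s) (x : Fin n), (x : ℕ) < s * p → (x : ℕ) / p = (j : ℕ) → f x = g j)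
    (hh : ∀ (k : Fin t) (x : Fin n), (x : ℕ) = s * p + (k : ℕ) → f x = h k) (i : Fin m) :
    (Finset.univ.filter (fun x => f x = i)).card
      = p * (Finset.univ.filter (fun j => g j = i)).card
        + (Finset.univ.filter (fun k => h k = i)).card := by
  classical
  rw [← Finset.card_filter_add_card_filter_not
    (s := Finset.univ.filter fun x : Fin n => f x = i) (p := fun x : Fin n => (x : ℕ) < s * p)]
  have htail : ((Finset.univ.filter fun x : Fin n => f x = i).filter
      (fun x : Fin n => ¬ (x : ℕ) < s * p)).card
      = (Finset.univ.filter (fun k => h k = i)).card := by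
    refine Finset.card_bij' (fun x hx => (⟨(x : ℕ) - s * p, ?_⟩ : Fin t))
      (fun k hk => (⟨s * p + (k : ℕ), ?_⟩ : Fin n)) ?_ ?_ ?_ ?_
    · simp only [Finset.mem_filter, Finset.mem_univ, true_and] at hx
      have := x.2; omega
    · have := k.2; omega
    · intro x hx
      simp only [Finset.mem_filter, Finset.mem_univ, true_and] at hx ⊢
      obtain ⟨hfx, hxge⟩ := hx
      rw [← hh _ x (show (x : ℕ) = s * p + ((x : ℕ) - s * p) by omega)]
      exact hfx
    · intro k hk
      simp only [Finset.mem_filter, Finset.mem_univ, true_and] at hk ⊢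
      exact ⟨(hh k _ rfl).trans hk, by omega⟩
    · intro x hx
      simp only [Finset.mem_filter, Finset.mem_univ, true_and] at hx
      apply Fin.ext
      simp only
      omega
    · intro k hk
      apply Fin.ext
      simp only
      omega
  have hdlt : ∀ x : Fin n, (x : ℕ) < s * p → (x : ℕ) / p < s := fun x hx =>
    (Nat.div_lt_iff_lt_mul hp0).mpr hx
  have hblock : ((Finset.univ.filter fun x : Fin n => f x = i).filter
      (fun x : Fin n => (x : ℕ) < s * p)).card
      = p * (Finset.univ.filter (fun j => g j = i)).card := by
    rw [Finset.card_eq_sum_card_fiberwise (t := Finset.univ.filter (fun j => g j = i))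
      (f := fun x : Fin n => if hx : (x : ℕ) < s * p then (⟨(x : ℕ) / p, hdlt x hx⟩ : Fin s)
        else ⟨0, hs0⟩)
      (by
        intro x hx
        simp only [Finset.mem_coe, Finset.mem_filter, Finset.mem_univ, true_and] at hx ⊢
        rw [dif_pos hx.2, ← hg ⟨(x : ℕ) / p, hdlt x hx.2⟩ x hx.2 rfl]
        exact hx.1)]
    have hfiber : ∀ j ∈ Finset.univ.filter (fun j : Fin s => g j = i),
        (((Finset.univ.filter fun x : Fin n => f x = i).filter
          (fun x : Fin n => (x : ℕ) < s * p)).filter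
          (fun x : Fin n => (if hx : (x : ℕ) < s * p then (⟨(x : ℕ) / p, hdlt x hx⟩ : Fin s)
            else ⟨0, hs0⟩) = j)).card = p := by
      intro j hj
      simp only [Finset.mem_filter, Finset.mem_univ, true_and] at hj
      have hjp : ∀ l : Fin p, (j : ℕ) * p + (l : ℕ) < s * p := by
        intro l
        calc (j : ℕ) * p + (l : ℕ) < ((j : ℕ) + 1) * p := by
              have := l.2; rw [Nat.succ_mul]; omega
        _ ≤ s * p := Nat.mul_le_mul_right p j.2
      have hjdiv : ∀ l : Fin p, ((j : ℕ) * p + (l : ℕ)) / p = (j : ℕ) := by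
        intro l
        rw [Nat.add_comm, Nat.add_mul_div_right _ _ hp0, Nat.div_eq_of_lt l.2, Nat.zero_add]
      have key : (((Finset.univ.filter fun x : Fin n => f x = i).filter
          (fun x : Fin n => (x : ℕ) < s * p)).filter
          (fun x : Fin n => (if hx : (x : ℕ) < s * p then (⟨(x : ℕ) / p, hdlt x hx⟩ : Fin s)
            else ⟨0, hs0⟩) = j)).card = (Finset.univ : Finset (Fin p)).card := by
        refine Finset.card_bij' (fun x hx => (⟨(x : ℕ) % p, Nat.mod_lt _ hp0⟩ : Fin p))
          (fun l hl => (⟨(j : ℕ) * p + (l : ℕ), lt_of_lt_of_le (hjp l) (by omega)⟩ : Fin n))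
          ?_ ?_ ?_ ?_
        · intro x hx; exact Finset.mem_univ _
        · intro l hl
          simp only [Finset.mem_filter, Finset.mem_univ, true_and]
          refine ⟨⟨?_, hjp l⟩, ?_⟩
          · rw [hg j _ (hjp l) (hjdiv l)]
            exact hj
          · rw [dif_pos (hjp l)]
            exact Fin.ext (hjdiv l)
        · intro x hx
          simp only [Finset.mem_filter, Finset.mem_univ, true_and] at hx
          obtain ⟨⟨hfx, hxlt⟩, hφ⟩ := hx
          rw [dif_pos hxlt] at hφ
          have hdx : (x : ℕ) / p = (j : ℕ) := congrArg Fin.val hφ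
          apply Fin.ext
          simp only
          rw [← hdx]
          exact Nat.div_add_mod' _ _
        · intro l hl
          apply Fin.ext
          simp only
          rw [Nat.add_comm, Nat.add_mul_mod_self_right, Nat.mod_eq_of_lt l.2]
      rw [key, Finset.card_univ, Fintype.card_fin]
    rw [Finset.sum_congr rfl hfiber, Finset.sum_const, smul_eq_mul, Nat.mul_comm]
  omega

lemma countA' (N m : ℕ) (c : Fin m → ℕ) (h : ∑ i, c i = N) :
    (Finset.univ.filter (fun g : Fin N → Fin m =>
      ∀ i, (Finset.univ.filter (fun x => g x = i)).card = c i)).card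
      = Nat.multinomial Finset.univ c := by
  rw [← nat_card_filter]
  rw [Nat.card_congr (Equiv.subtypeEquivRight
    (q := fun g : Fin N → Fin m => ∀ i, Nat.card {x // g x = i} = c i)
    (fun g => forall_congr' fun i => by rw [nat_card_filter]))]
  exact countA m (Fin N) c (by simpa using h)

lemma monoDiv {m p s n : ℕ} (hp0 : 0 < p) (f : Fin n → Fin m)
    (hM : ∀ j, 1 ≤ j → j ≤ s →
      ∃ i, ∀ x : Fin n, (j - 1) * p ≤ (x : ℕ) → (x : ℕ) < j * p → f x = i) :
    ∀ x y : Fin n, (x : ℕ) < s * p → (y : ℕ) < s * p →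
      (x : ℕ) / p = (y : ℕ) / p → f x = f y := by
  intro x y hx hy hxy
  obtain ⟨i, hi⟩ := hM ((x : ℕ) / p + 1) (Nat.succ_le_succ (Nat.zero_le _))
    (Nat.succ_le_of_lt ((Nat.div_lt_iff_lt_mul hp0).mpr hx))
  have h1 : f x = i := hi x
    (by simp only [Nat.add_sub_cancel]; exact Nat.div_mul_le_self _ _)
    ((Nat.div_lt_iff_lt_mul hp0).mp (Nat.lt_succ_self _))
  have h2 : f y = i := hi y
    (by simp only [Nat.add_sub_cancel]; rw [hxy]; exact Nat.div_mul_le_self _ _)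
    (by rw [hxy]; exact (Nat.div_lt_iff_lt_mul hp0).mp (Nat.lt_succ_self _))
  rw [h1, h2]

def invf {m : ℕ} (p s t n : ℕ) (hp0 : 0 < p) (htn : s * p + t = n)
    (g : Fin s → Fin m) (h : Fin t → Fin m) : Fin n → Fin m :=
  fun x => if hx : (x : ℕ) < s * p then g ⟨(x : ℕ) / p, (Nat.div_lt_iff_lt_mul hp0).mpr hx⟩
    else h ⟨(x : ℕ) - s * p, by have := x.2; omega⟩

/-- Counting ordered set-partitions of `{1, …, n}` of type `μ` in which each of the first `s`
blocks of `p` consecutive integers is contained in a single part. -/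
theorem stmt_5 (p : ℕ) (hp : p.Prime) (n d r s m : ℕ) (hn : n = d * p + r) (hr : r < p)
    (hs1 : 1 ≤ s) (hsd : s ≤ d) (μ u sres : Fin m → ℕ)
    (hμ : ∀ i, μ i = u i * p + sres i) (hsres : ∀ i, sres i < p)
    (hsum : ∑ i, μ i = n) :
    Nat.card {f : Fin n → Fin m //
        (∀ i, Nat.card {x : Fin n // f x = i} = μ i) ∧
        (∀ j, 1 ≤ j → j ≤ s →
          ∃ i, ∀ x : Fin n, (j - 1) * p ≤ (x : ℕ) → (x : ℕ) < j * p → f x = i)} =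
      ∑ c ∈ (Fintype.piFinset fun _ : Fin m => Finset.range (s + 1)).filter
          (fun c => (∀ i, c i ≤ u i) ∧ ∑ i, c i = s),
        Nat.multinomial Finset.univ c *
          Nat.multinomial Finset.univ (fun i => μ i - c i * p) := by
  classical
  have hp0 : 0 < p := hp.pos
  have hspn : s * p ≤ n := le_trans (Nat.mul_le_mul_right p hsd) (by omega)
  obtain ⟨t, ht⟩ : ∃ t, s * p + t = n := ⟨n - s * p, by omega⟩
  have hdlt : ∀ x : Fin n, (x : ℕ) < s * p → (x : ℕ) / p < s := fun x hx =>
    (Nat.div_lt_iff_lt_mul hp0).mpr hx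
  have hbb : ∀ j : Fin s, (j : ℕ) * p < s * p := by
    intro j
    have h1 := Nat.mul_le_mul_right p j.2
    rw [Nat.succ_mul] at h1
    omega
  have hembS : ∀ j : Fin s, (j : ℕ) * p < n := fun j => lt_of_lt_of_le (hbb j) hspn
  have hembT : ∀ k : Fin t, s * p + (k : ℕ) < n := fun k => by have := k.2; omega
  -- the three key property transports
  have hfwdR : ∀ (f : Fin n → Fin m), (∀ i, Nat.card {x : Fin n // f x = i} = μ i) →
      (∀ j, 1 ≤ j → j ≤ s →
        ∃ i, ∀ x : Fin n, (j - 1) * p ≤ (x : ℕ) → (x : ℕ) < j * p → f x = i) →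
      ∀ i, p * (Finset.univ.filter (fun j : Fin s => f ⟨(j : ℕ) * p, hembS j⟩ = i)).card
        + (Finset.univ.filter (fun k : Fin t => f ⟨s * p + (k : ℕ), hembT k⟩ = i)).card = μ i := by
    intro f hP hMo i
    rw [← blockCount hp0 hs1 ht f (fun j => f ⟨(j : ℕ) * p, hembS j⟩)
      (fun k => f ⟨s * p + (k : ℕ), hembT k⟩)
      (fun j x hx hdiv => monoDiv hp0 f hMo x ⟨(j : ℕ) * p, hembS j⟩ hx (hbb j)
        (by rw [hdiv]; exact (Nat.mul_div_cancel _ hp0).symm))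
      (fun k x hxe => congrArg f (Fin.ext hxe)) i]
    rw [← nat_card_filter]
    exact hP i
  have hinvP : ∀ (g : Fin s → Fin m) (h : Fin t → Fin m),
      (∀ i, p * (Finset.univ.filter (fun j => g j = i)).card
        + (Finset.univ.filter (fun k => h k = i)).card = μ i) →
      ∀ i, Nat.card {x : Fin n // invf p s t n hp0 ht g h x = i} = μ i := by
    intro g h hR i
    rw [nat_card_filter]
    rw [blockCount hp0 hs1 ht (invf p s t n hp0 ht g h) g h
      (fun j x hx hdiv => by
        simp only [invf, dif_pos hx]
        exact congrArg g (Fin.ext hdiv))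
      (fun k x hxe => by
        have hnx : ¬ (x : ℕ) < s * p := by omega
        simp only [invf, dif_neg hnx]
        exact congrArg h (Fin.ext (by simp only; omega))) i]
    exact hR i
  have hinvM : ∀ (g : Fin s → Fin m) (h : Fin t → Fin m),
      ∀ j, 1 ≤ j → j ≤ s → ∃ i, ∀ x : Fin n, (j - 1) * p ≤ (x : ℕ) → (x : ℕ) < j * p →
        invf p s t n hp0 ht g h x = i := by
    intro g h j hj1 hjs
    refine ⟨g ⟨j - 1, by omega⟩, fun x hx1 hx2 => ?_⟩
    have hxs : (x : ℕ) < s * p := lt_of_lt_of_le hx2 (Nat.mul_le_mul_right p hjs)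
    simp only [invf, dif_pos hxs]
    refine congrArg g (Fin.ext ?_)
    show (x : ℕ) / p = j - 1
    have hj' : ((j - 1) + 1) * p = j * p := by congr 1; omega
    have h1 : (j - 1) ≤ (x : ℕ) / p := (Nat.le_div_iff_mul_le hp0).mpr hx1
    have h2 : (x : ℕ) / p < (j - 1) + 1 := (Nat.div_lt_iff_lt_mul hp0).mpr
      (by rw [hj']; exact hx2)
    exact Nat.le_antisymm (Nat.lt_succ_iff.mp h2) h1
  -- Step 1: reduce to pairs of functions
  have step1 : Nat.card {f : Fin n → Fin m //
        (∀ i, Nat.card {x : Fin n // f x = i} = μ i) ∧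
        (∀ j, 1 ≤ j → j ≤ s →
          ∃ i, ∀ x : Fin n, (j - 1) * p ≤ (x : ℕ) → (x : ℕ) < j * p → f x = i)}
      = Nat.card {gh : (Fin s → Fin m) × (Fin t → Fin m) //
          ∀ i, p * (Finset.univ.filter (fun j => gh.1 j = i)).card
            + (Finset.univ.filter (fun k => gh.2 k = i)).card = μ i} := by
    apply Nat.card_congr
    refine ⟨fun f => ⟨(fun j => f.1 ⟨(j : ℕ) * p, hembS j⟩,
        fun k => f.1 ⟨s * p + (k : ℕ), hembT k⟩), hfwdR f.1 f.2.1 f.2.2⟩,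
      fun gh => ⟨invf p s t n hp0 ht gh.1.1 gh.1.2, hinvP gh.1.1 gh.1.2 gh.2,
        hinvM gh.1.1 gh.1.2⟩, ?_, ?_⟩
    · -- left inverse
      intro f
      apply Subtype.ext
      funext x
      show invf p s t n hp0 ht _ _ x = f.1 x
      by_cases hx : (x : ℕ) < s * p
      · simp only [invf, dif_pos hx]
        exact monoDiv hp0 f.1 f.2.2 ⟨(x : ℕ) / p * p, hembS ⟨(x : ℕ) / p, hdlt x hx⟩⟩ x
          (hbb ⟨(x : ℕ) / p, hdlt x hx⟩) hx (Nat.mul_div_cancel _ hp0)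
      · simp only [invf, dif_neg hx]
        exact congrArg f.1 (Fin.ext (show s * p + ((x : ℕ) - s * p) = (x : ℕ) by omega))
    · -- right inverse
      intro gh
      apply Subtype.ext
      apply Prod.ext
      · funext j
        show invf p s t n hp0 ht _ _ _ = gh.1.1 j
        have hx : ((⟨(j : ℕ) * p, hembS j⟩ : Fin n) : ℕ) < s * p := hbb j
        simp only [invf, dif_pos hx]
        exact congrArg gh.1.1 (Fin.ext (Nat.mul_div_cancel _ hp0))
      · funext k
        show invf p s t n hp0 ht _ _ _ = gh.1.2 k
        have hnx : ¬ ((⟨s * p + (k : ℕ), hembT k⟩ : Fin n) : ℕ) < s * p := by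
          simp only [Fin.val_mk]; omega
        simp only [invf, dif_neg hnx]
        exact congrArg gh.1.2 (Fin.ext (show s * p + (k : ℕ) - s * p = (k : ℕ) by omega))
  rw [step1, nat_card_filter]
  have H1 : ∀ gh ∈ Finset.univ.filter (fun gh : (Fin s → Fin m) × (Fin t → Fin m) =>
      ∀ i, p * (Finset.univ.filter (fun j => gh.1 j = i)).card
        + (Finset.univ.filter (fun k => gh.2 k = i)).card = μ i),
      (fun i => (Finset.univ.filter (fun j => gh.1 j = i)).card)
        ∈ (Fintype.piFinset fun _ : Fin m => Finset.range (s + 1)).filter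
          (fun c => (∀ i, c i ≤ u i) ∧ ∑ i, c i = s) := by
    intro gh hgh
    simp only [Finset.mem_filter, Finset.mem_univ, true_and] at hgh
    have hsumc : ∑ i, (Finset.univ.filter (fun j => gh.1 j = i)).card = s := by
      rw [← Finset.card_eq_sum_card_fiberwise (fun j _ => Finset.mem_univ (gh.1 j))]
      simp
    have hle : ∀ i, (Finset.univ.filter (fun j => gh.1 j = i)).card ≤ u i := by
      intro i
      have h1 := hgh i
      have h2 := hμ i
      have h3 := hsres i
      by_contra hgt
      push_neg at hgt
      have h4 : (u i + 1) * p ≤ (Finset.univ.filter (fun j => gh.1 j = i)).card * p :=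
        Nat.mul_le_mul_right p hgt
      rw [Nat.succ_mul] at h4
      have h5 : p * (Finset.univ.filter (fun j => gh.1 j = i)).card
          = (Finset.univ.filter (fun j => gh.1 j = i)).card * p := Nat.mul_comm _ _
      clear * - h1 h2 h3 h4 h5 hgt
      omega
    simp only [Finset.mem_filter, Fintype.mem_piFinset, Finset.mem_range]
    refine ⟨fun i => ?_, hle, hsumc⟩
    show (Finset.univ.filter (fun j => gh.1 j = i)).card < s + 1
    have h7 : (Finset.univ.filter (fun j => gh.1 j = i)).card
        ≤ ∑ i', (Finset.univ.filter (fun j => gh.1 j = i')).card :=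
      Finset.single_le_sum (f := fun i' => (Finset.univ.filter (fun j => gh.1 j = i')).card)
        (fun i _ => Nat.zero_le _) (Finset.mem_univ i)
    have h8 : ∑ i', (Finset.univ.filter (fun j => gh.1 j = i')).card = s := hsumc
    clear * - h7 h8
    omega
  rw [Finset.card_eq_sum_card_fiberwise H1]
  apply Finset.sum_congr rfl
  intro c hc
  simp only [Finset.mem_filter, Fintype.mem_piFinset, Finset.mem_range] at hc
  obtain ⟨hcr, hcu, hcs⟩ := hc
  have hcpμ : ∀ i, c i * p ≤ μ i := by
    intro i
    have h1 := hμ i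
    have h2 := Nat.mul_le_mul_right p (hcu i)
    clear * - h1 h2
    omega
  have hsum2 : ∑ i, (μ i - c i * p) = t := by
    rw [Finset.sum_tsub_distrib Finset.univ (fun i _ => hcpμ i), hsum, ← Finset.sum_mul, hcs]
    clear * - ht hspn
    omega
  rw [Finset.filter_filter]
  have hpred : ∀ gh : (Fin s → Fin m) × (Fin t → Fin m),
      ((∀ i, p * (Finset.univ.filter (fun j => gh.1 j = i)).card
          + (Finset.univ.filter (fun k => gh.2 k = i)).card = μ i)
        ∧ (fun i => (Finset.univ.filter (fun j => gh.1 j = i)).card) = c)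
      ↔ ((∀ i, (Finset.univ.filter (fun j => gh.1 j = i)).card = c i)
        ∧ (∀ i, (Finset.univ.filter (fun k => gh.2 k = i)).card = μ i - c i * p)) := by
    intro gh
    constructor
    · rintro ⟨hR, hψ⟩
      have h1 : ∀ i, (Finset.univ.filter (fun j => gh.1 j = i)).card = c i :=
        fun i => congrFun hψ i
      refine ⟨h1, fun i => ?_⟩
      have h2 := hR i
      rw [h1 i] at h2
      have h3 : p * c i = c i * p := Nat.mul_comm _ _
      clear * - h2 h3
      omega
    · rintro ⟨h1, h2⟩
      constructor
      · intro i
        rw [h1 i, h2 i]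
        have h4 := hcpμ i
        have h3 : p * c i = c i * p := Nat.mul_comm _ _
        clear * - h3 h4
        omega
      · funext i
        exact h1 i
  rw [Finset.filter_congr (fun gh _ => hpred gh)]
  have hsplit : Finset.univ.filter (fun gh : (Fin s → Fin m) × (Fin t → Fin m) =>
      (∀ i, (Finset.univ.filter (fun j => gh.1 j = i)).card = c i)
        ∧ (∀ i, (Finset.univ.filter (fun k => gh.2 k = i)).card = μ i - c i * p))
      = (Finset.univ.filter (fun g : Fin s → Fin m =>
          ∀ i, (Finset.univ.filter (fun j => g j = i)).card = c i)) ×ˢ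
        (Finset.univ.filter (fun h : Fin t → Fin m =>
          ∀ i, (Finset.univ.filter (fun k => h k = i)).card = μ i - c i * p)) := by
    ext gh
    simp only [Finset.mem_filter, Finset.mem_product, Finset.mem_univ, true_and]
  rw [hsplit, Finset.card_product]
  rw [countA' s m c hcs, countA' t m (fun i => μ i - c i * p) hsum2]
end

section
/- Let p be a prime and n = dp + r with 1 ≤ r ≤ p - 1 and d ≥ 1. Write b = vp + b_0 with 0 ≤ b_0 ≤ p - 1 and suppose a + b = n with a ≥ 1. If b_0 < r, then the number N(μ; d) = ∑_{(c_1,c_2)} C(d, c_2) · C(r-1, b - c_2 p), summed over pairs of nonnegative integers (c_1, c_2) with c_1 ≤ u, c_2 ≤ v, c_1 + c_2 = d (where a = up + a_0, 0 ≤ a_0 < p), equals C(d, v) · C(r-1, b_0), and this number is nonzero. -/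
/-- The count `N(μ; d)` for a hook `μ = (a, 1^b)` with `b_0 < r`:
`∑ C(d, c₂) C(r-1, b - c₂p) = C(d, v) C(r-1, b₀) ≠ 0`. -/
theorem stmt_6 (p : ℕ) (hp : p.Prime) (a b d r u v a0 b0 : ℕ)
    (hab : a + b = d * p + r) (hr1 : 1 ≤ r) (hr : r ≤ p - 1) (hd : 1 ≤ d)
    (ha : a = u * p + a0) (hb : b = v * p + b0) (ha0 : a0 ≤ p - 1) (hb0 : b0 ≤ p - 1)
    (hb0r : b0 < r) (ha1 : 1 ≤ a) :
    (∑ c ∈ (Finset.range (u + 1) ×ˢ Finset.range (v + 1)).filter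
          (fun c => c.1 + c.2 = d),
        d.choose c.2 * (r - 1).choose (b - c.2 * p))
      = d.choose v * (r - 1).choose b0 ∧
    d.choose v * (r - 1).choose b0 ≠ 0 := by
  have hp2 : 2 ≤ p := hp.two_le
  have ha0' : a0 + 1 ≤ p := by omega
  have hb0' : b0 + 1 ≤ p := by omega
  have hr' : r + 1 ≤ p := by omega
  have huv : u + v = d := by
    by_contra hne
    rcases Nat.lt_or_ge (u + v) d with h1 | h1
    · have h2 : (u + v + 1) * p ≤ d * p := Nat.mul_le_mul_right p h1
      have h3 : u * p + v * p + p ≤ d * p := by nlinarith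
      linarith
    · have h1' : d + 1 ≤ u + v := by omega
      have h2 : (d + 1) * p ≤ (u + v) * p := Nat.mul_le_mul_right p h1'
      have h3 : d * p + p ≤ u * p + v * p := by nlinarith
      linarith
  have hdp : u * p + v * p = d * p := by rw [← add_mul, huv]
  have hfilter : (Finset.range (u + 1) ×ˢ Finset.range (v + 1)).filter
      (fun c => c.1 + c.2 = d) = {(u, v)} := by
    ext ⟨c1, c2⟩
    simp only [Finset.mem_filter, Finset.mem_product, Finset.mem_range,
      Finset.mem_singleton, Prod.mk.injEq]
    omega
  have hbv : b - v * p = b0 := by omega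
  constructor
  · rw [hfilter, Finset.sum_singleton, hbv]
  · have h1 : 0 < d.choose v := Nat.choose_pos (by omega)
    have h2 : 0 < (r - 1).choose b0 := Nat.choose_pos (by omega)
    positivity
end

section
/- Let p be a prime and n = dp + r with 1 ≤ r ≤ p - 1, d ≥ 1. Write a = up + a_0 and b = vp + b_0 as before with a + b = n and r ≤ b_0. Then the sum ∑_{(c_1,c_2)} C(d-1, c_2) · C(p + r - 1, b - c_2 p), over pairs (c_1, c_2) of nonnegative integers with c_1 ≤ u, c_2 ≤ v, c_1 + c_2 = d - 1, equals C(d-1, v) · C(p + r - 1, b_0); moreover this equals zero if and only if v = d and b_0 = r (equivalently a = 0). -/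
lemma stmt7_split (p w d s r : ℕ) (hp : 0 < p) (hs : s < 2 * p) (hr : r < p)
    (h : w * p + s = d * p + r) : (w = d ∧ s = r) ∨ (w + 1 = d ∧ s = p + r) := by
  rcases lt_trichotomy w d with h1 | h1 | h1
  · rcases eq_or_lt_of_le (Nat.succ_le_of_lt h1) with h2 | h2
    · right
      refine ⟨h2, ?_⟩
      rw [← h2] at h
      have e : (w + 1) * p = w * p + p := by ring
      linarith
    · exfalso
      have h3 : w + 2 ≤ d := h2
      have h4 : (w + 2) * p ≤ d * p := Nat.mul_le_mul h3 le_rfl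
      have e : (w + 2) * p = w * p + 2 * p := by ring
      linarith
  · left
    refine ⟨h1, ?_⟩
    rw [h1] at h
    linarith
  · exfalso
    have h3 : d + 1 ≤ w := h1
    have h4 : (d + 1) * p ≤ w * p := Nat.mul_le_mul h3 le_rfl
    have e : (d + 1) * p = d * p + p := by ring
    linarith

/-- The count `N(μ; d-1)` for a hook `μ = (a, 1^b)` with `r ≤ b₀`:
`∑ C(d-1, c₂) C(p+r-1, b - c₂p) = C(d-1, v) C(p+r-1, b₀)`, which vanishes iff `v = d` and
`b₀ = r`, equivalently `a = 0`. -/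
theorem stmt_7 (p : ℕ) (hp : p.Prime) (a b d r u v a0 b0 : ℕ)
    (hab : a + b = d * p + r) (hr1 : 1 ≤ r) (hr : r ≤ p - 1) (hd : 1 ≤ d)
    (ha : a = u * p + a0) (hb : b = v * p + b0) (ha0 : a0 ≤ p - 1) (hb0 : b0 ≤ p - 1)
    (hrb0 : r ≤ b0) :
    (∑ c ∈ (Finset.range (u + 1) ×ˢ Finset.range (v + 1)).filter
          (fun c => c.1 + c.2 = d - 1),
        (d - 1).choose c.2 * (p + r - 1).choose (b - c.2 * p))
      = (d - 1).choose v * (p + r - 1).choose b0 ∧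
    ((d - 1).choose v * (p + r - 1).choose b0 = 0 ↔ (v = d ∧ b0 = r)) ∧
    ((v = d ∧ b0 = r) ↔ a = 0) := by
  have hp2 : 2 ≤ p := hp.two_le
  have hsum : (u + v) * p + (a0 + b0) = d * p + r := by
    rw [ha, hb] at hab
    have e : (u + v) * p = u * p + v * p := by ring
    linarith
  have hcase := stmt7_split p (u + v) d (a0 + b0) r (by omega) (by omega) (by omega) hsum
  have hvd : v ≤ d := by omega
  have huv : d - 1 ≤ u + v := by omega
  -- terms with c2 < v vanish
  have hzero : ∀ c2 : ℕ, c2 < v → (p + r - 1).choose (b - c2 * p) = 0 := by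
    intro c2 hc2
    have h1 : (c2 + 1) * p ≤ v * p := Nat.mul_le_mul (by omega) le_rfl
    have e : (c2 + 1) * p = c2 * p + p := by ring
    have h2 : p + b0 ≤ b - c2 * p := Nat.le_sub_of_add_le (by rw [hb]; linarith)
    exact Nat.choose_eq_zero_of_lt (lt_of_lt_of_le (by omega) h2)
  have hbv : b - v * p = b0 := by rw [hb, Nat.add_sub_cancel_left]
  refine ⟨?_, ?_, ?_⟩
  · by_cases hvlt : v < d
    · have hmem : ((d - 1 - v, v) : ℕ × ℕ) ∈
          (Finset.range (u + 1) ×ˢ Finset.range (v + 1)).filter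
            (fun c => c.1 + c.2 = d - 1) := by
        simp only [Finset.mem_filter, Finset.mem_product, Finset.mem_range]
        omega
      rw [Finset.sum_eq_single_of_mem _ hmem]
      · rw [hbv]
      · rintro ⟨c1, c2⟩ hc hne
        simp only [Finset.mem_filter, Finset.mem_product, Finset.mem_range] at hc
        have hc2 : c2 < v := by
          rcases Nat.lt_or_ge c2 v with h | h
          · exact h
          · exfalso
            have hc2v : c2 = v := by omega
            have hc1v : c1 = d - 1 - v := by omega
            exact hne (by rw [hc1v, hc2v])
        rw [hzero c2 hc2, mul_zero]
    · have hv : v = d := by omega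
      rw [Finset.sum_eq_zero, hv, Nat.choose_eq_zero_of_lt (by omega), zero_mul]
      rintro ⟨c1, c2⟩ hc
      simp only [Finset.mem_filter, Finset.mem_product, Finset.mem_range] at hc
      rw [hzero c2 (by omega), mul_zero]
  · constructor
    · intro h0
      rcases Nat.mul_eq_zero.mp h0 with h | h
      · have hdv : d - 1 < v := Nat.choose_eq_zero_iff.mp h
        have hv : v = d := by omega
        refine ⟨hv, ?_⟩
        rcases hcase with ⟨h1, h2⟩ | ⟨h1, h2⟩ <;> omega
      · exfalso
        have := Nat.choose_eq_zero_iff.mp h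
        omega
    · rintro ⟨hv, -⟩
      rw [hv, Nat.choose_eq_zero_of_lt (by omega), zero_mul]
  · constructor
    · rintro ⟨hv, hbr⟩
      have hbval : b = d * p + r := by rw [hb, hv, hbr]
      rw [hbval] at hab
      linarith
    · intro ha0
      rw [ha0] at ha
      have hup : u * p = 0 := Nat.le_zero.mp (by linarith)
      have hu : u = 0 := by
        rcases Nat.mul_eq_zero.mp hup with h | h
        · exact h
        · omega
      have ha00 : a0 = 0 := by linarith
      rcases hcase with ⟨h1, h2⟩ | ⟨h1, h2⟩ <;> omega
end

section
/- Let p be a prime and μ = (a, 1^b) a hook partition. In the Specht module S^μ over a field k, for 2 ≤ i (with I_i = {(i-1)p+1, …, ip} contained in {1, …, a+b}) and the p-cycle g_i on I_i, and t a standard μ-tableau: g_i · e_t = ± e_{t'} for some standard μ-tableau t', and g_i · e_t = e_t if and only if I_i is contained entirely in the first row of t or entirely in the first column of t. -/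
/-! Specht modules of hook shape `μ = (a, 1^b)`. A `μ`-tableau with entries in `{1, …, n}`
(modelled 0-based as `Fin n`) is a bijection from the cells `Fin a ⊕ Fin b` (first row,
and the rest of the first column) to `Fin n`. A `μ`-tabloid is determined by the ordered
tuple of entries in rows `2, …, b+1`, i.e. by an embedding `Fin b ↪ Fin n`; the Specht
module sits inside the permutation module `(Fin b ↪ Fin n) →₀ k`, spanned by the
polytabloids `e_t`. -/

/-- The entries of the first column of a hook tableau `t`, read downwards:
position `0` is the corner cell `(1,1)`, position `i+1` is the cell `(i+2, 1)`. -/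
def hookCol {a b n : ℕ} (ha : 1 ≤ a) (t : (Fin a ⊕ Fin b) ≃ Fin n)
    (i : Fin (b + 1)) : Fin n :=
  if h : (i : ℕ) = 0 then t (Sum.inl ⟨0, ha⟩)
  else t (Sum.inr ⟨(i : ℕ) - 1, by have := i.isLt; omega⟩)

lemma hookCol_injective {a b n : ℕ} (ha : 1 ≤ a) (t : (Fin a ⊕ Fin b) ≃ Fin n) :
    Function.Injective (hookCol ha t) := by
  intro x y hxy
  unfold hookCol at hxy
  split_ifs at hxy with h1 h2 h2
  · exact Fin.ext (by omega)
  · exact absurd (t.injective hxy) (by simp)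
  · exact absurd (t.injective hxy) (by simp)
  · have h3 := t.injective hxy
    simp only [Sum.inr.injEq, Fin.mk.injEq] at h3
    have hx := x.isLt; have hy := y.isLt
    exact Fin.ext (by omega)

/-- The tabloid obtained from the tableau `t` by permuting the first-column entries by
`σ` : the ordered tuple of entries below the first row. -/
def hookEmb {a b n : ℕ} (ha : 1 ≤ a) (t : (Fin a ⊕ Fin b) ≃ Fin n)
    (σ : Equiv.Perm (Fin (b + 1))) : Fin b ↪ Fin n :=
  ⟨fun i => hookCol ha t (σ i.succ), by
    intro x y h
    exact Fin.succ_injective _ (σ.injective (hookCol_injective ha t h))⟩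

/-- The polytabloid `e_t = ∑_{σ ∈ C_t} sgn(σ) {σ t}` associated to a hook tableau `t`. -/
noncomputable def polytabloid (k : Type) [Field k] {a b n : ℕ} (ha : 1 ≤ a)
    (t : (Fin a ⊕ Fin b) ≃ Fin n) : (Fin b ↪ Fin n) →₀ k :=
  ∑ σ : Equiv.Perm (Fin (b + 1)),
    ((Equiv.Perm.sign σ : ℤ) : k) • Finsupp.single (hookEmb ha t σ) (1 : k)

/-- A hook tableau is standard when the entries increase along the first row and down
the first column. -/
def IsStandard {a b n : ℕ} (ha : 1 ≤ a) (t : (Fin a ⊕ Fin b) ≃ Fin n) : Prop :=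
  StrictMono (fun j : Fin a => t (Sum.inl j)) ∧ StrictMono (hookCol ha t)

/-- The `p`-cycle on the block `I_i = {(i-1)p, …, ip - 1}` (0-based). -/
def gperm (p n i : ℕ) : Equiv.Perm (Fin n) :=
  ((List.finRange n).filter
    (fun x : Fin n => decide ((i - 1) * p ≤ (x : ℕ) ∧ (x : ℕ) < i * p))).formPerm

section Aux

variable {a b n : ℕ}

lemma hookCol_zero (ha : 1 ≤ a) (t : (Fin a ⊕ Fin b) ≃ Fin n) :
    hookCol ha t 0 = t (Sum.inl ⟨0, ha⟩) := dif_pos rfl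

lemma hookCol_succ (ha : 1 ≤ a) (t : (Fin a ⊕ Fin b) ≃ Fin n) (j : Fin b) :
    hookCol ha t j.succ = t (Sum.inr j) := by
  have h : ((j.succ : Fin (b + 1)) : ℕ) ≠ 0 := by simp [Fin.val_succ]
  rw [hookCol, dif_neg h]
  exact congrArg t (congrArg Sum.inr (Fin.ext (by simp [Fin.val_succ])))

lemma hookCol_trans (ha : 1 ≤ a) (t : (Fin a ⊕ Fin b) ≃ Fin n) (g : Equiv.Perm (Fin n))
    (w : Fin (b + 1)) : hookCol ha (t.trans g) w = g (hookCol ha t w) := by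
  unfold hookCol
  split_ifs <;> rfl

lemma hookEmb_apply (ha : 1 ≤ a) (t : (Fin a ⊕ Fin b) ≃ Fin n)
    (σ : Equiv.Perm (Fin (b + 1))) (i : Fin b) :
    hookEmb ha t σ i = hookCol ha t (σ i.succ) := rfl

lemma hookEmb_injective (ha : 1 ≤ a) (t : (Fin a ⊕ Fin b) ≃ Fin n) :
    Function.Injective (hookEmb ha t) := by
  intro σ σ' h
  have hs : ∀ i : Fin b, σ i.succ = σ' i.succ := by
    intro i
    have h2 : hookEmb ha t σ i = hookEmb ha t σ' i := by rw [h]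
    rw [hookEmb_apply, hookEmb_apply] at h2
    exact hookCol_injective ha t h2
  ext w
  rcases Fin.eq_zero_or_eq_succ w with rfl | ⟨j, rfl⟩
  · have happ := σ'.apply_symm_apply (σ 0)
    rcases Fin.eq_zero_or_eq_succ (σ'.symm (σ 0)) with hc | ⟨j, hc⟩
    · rw [hc] at happ
      exact congrArg Fin.val happ.symm
    · rw [hc, ← hs j] at happ
      exact absurd (σ.injective happ) (Fin.succ_ne_zero j)
  · exact congrArg Fin.val (hs j)

lemma hookEmb_congr (ha : 1 ≤ a) {t t' : (Fin a ⊕ Fin b) ≃ Fin n}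
    (h : ∀ w, hookCol ha t w = hookCol ha t' w) (σ : Equiv.Perm (Fin (b + 1))) :
    hookEmb ha t σ = hookEmb ha t' σ := by
  ext i
  rw [hookEmb_apply, hookEmb_apply, h]

lemma polytabloid_congr (k : Type) [Field k] (ha : 1 ≤ a) {t t' : (Fin a ⊕ Fin b) ≃ Fin n}
    (h : ∀ w, hookCol ha t w = hookCol ha t' w) :
    polytabloid k ha t = polytabloid k ha t' := by
  unfold polytabloid
  exact Finset.sum_congr rfl fun σ _ => by rw [hookEmb_congr ha h]

lemma polytabloid_act (k : Type) [Field k] (ha : 1 ≤ a) (t : (Fin a ⊕ Fin b) ≃ Fin n)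
    (g : Equiv.Perm (Fin n)) :
    (Representation.ofMulAction k (Equiv.Perm (Fin n)) (Fin b ↪ Fin n)) g
      (MonoidAlgebra.ofCoeff (polytabloid k ha t)) = MonoidAlgebra.ofCoeff (polytabloid k ha (t.trans g)) := by
  unfold polytabloid
  rw [MonoidAlgebra.ofCoeff_sum, map_sum, MonoidAlgebra.ofCoeff_sum]
  refine Finset.sum_congr rfl fun σ _ => ?_
  rw [MonoidAlgebra.ofCoeff_smul, MonoidAlgebra.ofCoeff_smul, MonoidAlgebra.ofCoeff_single,
    MonoidAlgebra.ofCoeff_single, map_smul, Representation.ofMulAction_single]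
  have hemb : g • hookEmb ha t σ = hookEmb ha (t.trans g) σ := by
    ext i
    rw [Function.Embedding.smul_apply, hookEmb_apply, hookEmb_apply, hookCol_trans]
    rfl
  rw [hemb]

lemma polytabloid_perm (k : Type) [Field k] (ha : 1 ≤ a) {t t' : (Fin a ⊕ Fin b) ≃ Fin n}
    (τ : Equiv.Perm (Fin (b + 1))) (h : ∀ w, hookCol ha t' w = hookCol ha t (τ w)) :
    polytabloid k ha t' = ((Equiv.Perm.sign τ : ℤ) : k) • polytabloid k ha t := by
  have he : ∀ σ : Equiv.Perm (Fin (b + 1)), hookEmb ha t' σ = hookEmb ha t (τ * σ) := by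
    intro σ
    ext i
    rw [hookEmb_apply, hookEmb_apply, Equiv.Perm.mul_apply]
    exact congrArg Fin.val (h (σ i.succ))
  have hs2 : ((Equiv.Perm.sign τ : ℤ) : k) * ((Equiv.Perm.sign τ : ℤ) : k) = 1 := by
    rcases Int.units_eq_one_or (Equiv.Perm.sign τ) with h1 | h1 <;> rw [h1] <;> norm_num
  unfold polytabloid
  rw [Finset.smul_sum]
  refine Fintype.sum_bijective (fun σ => τ * σ) (Equiv.mulLeft τ).bijective _ _ fun σ => ?_
  rw [he σ, smul_smul]
  congr 1
  rw [map_mul, Units.val_mul, Int.cast_mul, ← mul_assoc, hs2, one_mul]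

lemma polytabloid_apply_ne_zero_iff (k : Type) [Field k] (ha : 1 ≤ a)
    (t : (Fin a ⊕ Fin b) ≃ Fin n) (e : Fin b ↪ Fin n) :
    polytabloid k ha t e ≠ 0 ↔ ∃ σ, hookEmb ha t σ = e := by
  have happ : polytabloid k ha t e =
      ∑ σ : Equiv.Perm (Fin (b + 1)),
        (if hookEmb ha t σ = e then ((Equiv.Perm.sign σ : ℤ) : k) else 0) := by
    unfold polytabloid
    rw [Finsupp.finset_sum_apply]
    refine Finset.sum_congr rfl fun σ _ => ?_
    rw [Finsupp.smul_apply, Finsupp.single_apply]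
    split_ifs <;> simp
  rw [happ]
  constructor
  · intro h
    by_contra hc
    push_neg at hc
    exact h (Finset.sum_eq_zero fun σ _ => if_neg (hc σ))
  · rintro ⟨σ₀, rfl⟩
    rw [Finset.sum_eq_single σ₀]
    · rw [if_pos rfl]
      rcases Int.units_eq_one_or (Equiv.Perm.sign σ₀) with h1 | h1 <;> rw [h1] <;> norm_num
    · intro σ _ hne
      exact if_neg fun hc => hne (hookEmb_injective ha t hc)
    · intro hmem
      exact absurd (Finset.mem_univ σ₀) hmem

/-- The list underlying `gperm`. -/
def glist (p n i : ℕ) : List (Fin n) :=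
  (List.finRange n).filter
    (fun x : Fin n => decide ((i - 1) * p ≤ (x : ℕ) ∧ (x : ℕ) < i * p))

lemma gperm_eq (p n i : ℕ) : gperm p n i = (glist p n i).formPerm := rfl

lemma glist_nodup (p n i : ℕ) : (glist p n i).Nodup :=
  (List.nodup_finRange n).filter _

lemma mem_glist {p n i : ℕ} {x : Fin n} :
    x ∈ glist p n i ↔ ((i - 1) * p ≤ (x : ℕ) ∧ (x : ℕ) < i * p) := by
  simp [glist, List.mem_filter]

lemma glist_length {p n i : ℕ} (hi : 1 ≤ i) (hn0 : 0 < n) (hin : i * p ≤ n) :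
    (glist p n i).length = p := by
  have hip : i * p = (i - 1) * p + p := by
    obtain ⟨m, rfl⟩ : ∃ m, i = m + 1 := ⟨i - 1, by omega⟩
    simp [Nat.add_mul]
  rw [← List.toFinset_card_of_nodup (glist_nodup p n i)]
  have h2 : (glist p n i).toFinset =
      Finset.univ.filter (fun x : Fin n => (i - 1) * p ≤ (x : ℕ) ∧ (x : ℕ) < i * p) := by
    ext x
    simp [mem_glist]
  rw [h2]
  have hcard : (Finset.univ.filter
      (fun x : Fin n => (i - 1) * p ≤ (x : ℕ) ∧ (x : ℕ) < i * p)).card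
      = (Finset.range p).card := by
    refine Finset.card_nbij' (fun x => (x : ℕ) - (i - 1) * p)
      (fun j => if h : (i - 1) * p + j < n then ⟨(i - 1) * p + j, h⟩ else ⟨0, hn0⟩)
      ?_ ?_ ?_ ?_
    · intro x hx
      simp only [Finset.mem_coe, Finset.mem_filter, Finset.mem_univ, true_and] at hx
      simp only [Finset.mem_coe, Finset.mem_range]
      omega
    · intro j hj
      simp only [Finset.mem_coe, Finset.mem_range] at hj
      dsimp only
      rw [dif_pos (by omega)]
      simp only [Finset.mem_coe, Finset.mem_filter, Finset.mem_univ, true_and]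
      exact ⟨by omega, by omega⟩
    · intro x hx
      simp only [Finset.mem_coe, Finset.mem_filter, Finset.mem_univ, true_and] at hx
      dsimp only
      rw [dif_pos (by omega)]
      refine Fin.ext ?_
      show (i - 1) * p + ((x : ℕ) - (i - 1) * p) = (x : ℕ)
      omega
    · intro j hj
      simp only [Finset.mem_coe, Finset.mem_range] at hj
      dsimp only
      rw [dif_pos (by omega)]
      show (i - 1) * p + j - (i - 1) * p = j
      omega
  rw [hcard, Finset.card_range]

lemma gperm_apply_of_not {p n i : ℕ} {x : Fin n}
    (h : ¬((i - 1) * p ≤ (x : ℕ) ∧ (x : ℕ) < i * p)) : gperm p n i x = x :=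
  List.formPerm_apply_of_notMem fun hc => h (mem_glist.mp hc)

lemma gperm_mem {p n i : ℕ} {x : Fin n}
    (h : (i - 1) * p ≤ (x : ℕ) ∧ (x : ℕ) < i * p) :
    (i - 1) * p ≤ ((gperm p n i x : Fin n) : ℕ) ∧ ((gperm p n i x : Fin n) : ℕ) < i * p :=
by
  have h1 : gperm p n i x ∈ glist p n i :=
    List.formPerm_apply_mem_of_mem (l := glist p n i) (mem_glist.mpr h)
  exact mem_glist.mp h1

lemma gperm_pow {p n i : ℕ} (hi : 1 ≤ i) (hn0 : 0 < n) (hin : i * p ≤ n) :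
    gperm p n i ^ p = 1 := by
  have hl : (glist p n i).formPerm ^ (glist p n i).length = 1 :=
    List.formPerm_pow_length_eq_one_of_nodup _ (glist_nodup p n i)
  rwa [glist_length hi hn0 hin] at hl

lemma gperm_exists_pow {p n i : ℕ} (hi : 1 ≤ i) (hn0 : 0 < n) (hin : i * p ≤ n)
    {x y : Fin n} (hx : (i - 1) * p ≤ (x : ℕ) ∧ (x : ℕ) < i * p)
    (hy : (i - 1) * p ≤ (y : ℕ) ∧ (y : ℕ) < i * p) :
    ∃ m : ℕ, ((gperm p n i) ^ m) x = y := by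
  obtain ⟨ix, hix, hgx⟩ := List.mem_iff_getElem.mp (mem_glist.mpr hx)
  obtain ⟨iy, hiy, hgy⟩ := List.mem_iff_getElem.mp (mem_glist.mpr hy)
  refine ⟨iy + (glist p n i).length - ix, ?_⟩
  rw [gperm_eq, ← hgx, ← hgy,
    List.formPerm_pow_apply_getElem _ (glist_nodup p n i) _ _ hix]
  refine getElem_congr_idx ?_
  have h1 : ix + (iy + (glist p n i).length - ix) = iy + (glist p n i).length := by omega
  rw [h1, Nat.add_mod_right]
  exact Nat.mod_eq_of_lt hiy

lemma standard_corner (ha : 1 ≤ a) (hn0 : 0 < n) (t : (Fin a ⊕ Fin b) ≃ Fin n)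
    (ht : IsStandard ha t) : ((t (Sum.inl ⟨0, ha⟩) : Fin n) : ℕ) = 0 := by
  obtain ⟨c, hc⟩ := t.surjective ⟨0, hn0⟩
  have key : t (Sum.inl ⟨0, ha⟩) ≤ (⟨0, hn0⟩ : Fin n) := by
    rcases c with j | j
    · rw [← hc]
      exact ht.1.monotone (by simp [Fin.le_def])
    · rw [← hc]
      have h2 := ht.2.monotone (Fin.zero_le (Fin.succ j))
      rw [hookCol_zero, hookCol_succ] at h2
      exact h2
  have h9 := Fin.le_def.mp key
  have h10 : ((⟨0, hn0⟩ : Fin n) : ℕ) = 0 := rfl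
  omega

lemma sign_cast_eq_one {p : ℕ} (hp : p.Prime) (k : Type) [Field k] [CharP k p]
    {m : ℕ} (τ : Equiv.Perm (Fin m)) (h : τ ^ p = 1) :
    ((Equiv.Perm.sign τ : ℤ) : k) = 1 := by
  rcases Int.units_eq_one_or (Equiv.Perm.sign τ) with h1 | h1
  · rw [h1]; norm_num
  · have h2 : Equiv.Perm.sign τ ^ p = 1 := by rw [← map_pow, h, map_one]
    rw [h1] at h2
    have hev : Even p := by
      by_contra hodd
      rw [Odd.neg_one_pow (Nat.not_even_iff_odd.mp hodd)] at h2
      exact absurd h2 (by decide)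
    have hp2 : p = 2 := (Nat.Prime.even_iff hp).mp hev
    subst hp2
    rw [h1]
    have h2' : (2 : k) = 0 := by exact_mod_cast CharP.cast_eq_zero k 2
    simp only [Units.val_neg, Units.val_one, Int.cast_neg, Int.cast_one]
    linear_combination -h2'

lemma sort_tableau (ha : 1 ≤ a) (s : (Fin a ⊕ Fin b) ≃ Fin n)
    (h0 : ((s (Sum.inl ⟨0, ha⟩) : Fin n) : ℕ) = 0) :
    ∃ t' : (Fin a ⊕ Fin b) ≃ Fin n, IsStandard ha t' ∧
      ∃ τ : Equiv.Perm (Fin (b + 1)), ∀ w, hookCol ha t' w = hookCol ha s (τ w) := by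
  set ρa := Tuple.sort (fun j : Fin a => s (Sum.inl j)) with hρa
  set ρb := Tuple.sort (fun j : Fin b => s (Sum.inr j)) with hρb
  have hqinj : Function.Injective (fun j : Fin a => s (Sum.inl j)) := fun j j' hjj =>
    Sum.inl_injective (s.injective hjj)
  have hrinj : Function.Injective (fun j : Fin b => s (Sum.inr j)) := fun j j' hjj =>
    Sum.inr_injective (s.injective hjj)
  have hqmono : StrictMono ((fun j : Fin a => s (Sum.inl j)) ∘ ρa) :=
    (Tuple.monotone_sort _).strictMono_of_injective (hqinj.comp ρa.injective)
  have hrmono : StrictMono ((fun j : Fin b => s (Sum.inr j)) ∘ ρb) :=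
    (Tuple.monotone_sort _).strictMono_of_injective (hrinj.comp ρb.injective)
  have hρa0 : ρa ⟨0, ha⟩ = ⟨0, ha⟩ := by
    have h1 : ((fun j : Fin a => s (Sum.inl j)) ∘ ρa) ⟨0, ha⟩ ≤
        ((fun j : Fin a => s (Sum.inl j)) ∘ ρa) (ρa.symm ⟨0, ha⟩) :=
      hqmono.monotone (by simp [Fin.le_def])
    simp only [Function.comp_apply, Equiv.apply_symm_apply] at h1
    have h2 := Fin.le_def.mp h1
    have h3 : s (Sum.inl (ρa ⟨0, ha⟩)) = s (Sum.inl ⟨0, ha⟩) := Fin.ext (by omega)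
    exact Sum.inl_injective (s.injective h3)
  have hposr : ∀ j : Fin b, 0 < ((s (Sum.inr (ρb j)) : Fin n) : ℕ) := by
    intro j
    rcases Nat.eq_zero_or_pos ((s (Sum.inr (ρb j)) : Fin n) : ℕ) with heq | hlt
    · exfalso
      have hcc : s (Sum.inr (ρb j)) = s (Sum.inl ⟨0, ha⟩) := Fin.ext (by omega)
      simpa using s.injective hcc
    · exact hlt
  refine ⟨(Equiv.sumCongr ρa ρb).trans s, ⟨?_, ?_⟩,
    Equiv.Perm.decomposeFin.symm (0, ρb), ?_⟩
  · intro u v huv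
    exact hqmono huv
  · intro u v huv
    rcases Fin.eq_zero_or_eq_succ u with rfl | ⟨j, rfl⟩ <;>
      rcases Fin.eq_zero_or_eq_succ v with rfl | ⟨w, rfl⟩
    · exact absurd huv (lt_irrefl _)
    · rw [hookCol_zero, hookCol_succ]
      show s (Sum.inl (ρa ⟨0, ha⟩)) < s (Sum.inr (ρb w))
      rw [hρa0, Fin.lt_def]
      have := hposr w
      omega
    · exact absurd huv (by simp [Fin.lt_def])
    · rw [hookCol_succ, hookCol_succ]
      exact hrmono (Fin.succ_lt_succ_iff.mp huv)
  · intro w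
    rcases Fin.eq_zero_or_eq_succ w with rfl | ⟨j, rfl⟩
    · rw [Equiv.Perm.decomposeFin_symm_apply_zero, hookCol_zero, hookCol_zero]
      show s (Sum.inl (ρa ⟨0, ha⟩)) = s (Sum.inl ⟨0, ha⟩)
      rw [hρa0]
    · rw [Equiv.Perm.decomposeFin_symm_apply_succ]
      simp only [Equiv.swap_self, Equiv.refl_apply]
      rw [hookCol_succ, hookCol_succ]
      rfl

end Aux

/-- For `i ≥ 2`, the `p`-cycle `g_i` sends the polytabloid `e_t` of a standard hook
tableau to `± e_{t'}` for a standard tableau `t'`, with `g_i e_t = e_t` iff the block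
`I_i` lies entirely in the first row or entirely in the first column of `t`. -/
theorem stmt_15 (p : ℕ) (hp : p.Prime) (k : Type) [Field k] [CharP k p]
    (a b n i : ℕ) (ha : 1 ≤ a) (hn : n = a + b) (hi : 2 ≤ i) (hin : i * p ≤ n)
    (t : (Fin a ⊕ Fin b) ≃ Fin n) (ht : IsStandard ha t) :
    ∃ t' : (Fin a ⊕ Fin b) ≃ Fin n, IsStandard ha t' ∧
      ((Representation.ofMulAction k (Equiv.Perm (Fin n)) (Fin b ↪ Fin n)) (gperm p n i)
          (MonoidAlgebra.ofCoeff (polytabloid k ha t)) = MonoidAlgebra.ofCoeff (polytabloid k ha t') ∨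
        (Representation.ofMulAction k (Equiv.Perm (Fin n)) (Fin b ↪ Fin n)) (gperm p n i)
          (MonoidAlgebra.ofCoeff (polytabloid k ha t)) = MonoidAlgebra.ofCoeff (- polytabloid k ha t')) ∧
      ((Representation.ofMulAction k (Equiv.Perm (Fin n)) (Fin b ↪ Fin n)) (gperm p n i)
          (MonoidAlgebra.ofCoeff (polytabloid k ha t)) = MonoidAlgebra.ofCoeff (polytabloid k ha t) ↔
        ((∀ x : Fin n, (i - 1) * p ≤ (x : ℕ) → (x : ℕ) < i * p →
            ∃ j : Fin a, t (Sum.inl j) = x) ∨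
          (∀ x : Fin n, (i - 1) * p ≤ (x : ℕ) → (x : ℕ) < i * p →
            ∃ j : Fin (b + 1), hookCol ha t j = x))) := by
  have hp2 := hp.two_le
  have hipos : 0 < i * p := Nat.mul_pos (by omega) (by omega)
  have hn0 : 0 < n := by omega
  have hi1 : 1 ≤ i := by omega
  have hip : i * p = (i - 1) * p + p := by
    obtain ⟨m, hm⟩ : ∃ m, i = m + 1 := ⟨i - 1, by omega⟩
    subst hm
    simp [Nat.add_mul]
  have hmpos : 0 < (i - 1) * p := Nat.mul_pos (by omega) (by omega)
  have hcorner := standard_corner ha hn0 t ht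
  have hs0 : (((t.trans (gperm p n i)) (Sum.inl ⟨0, ha⟩) : Fin n) : ℕ) = 0 := by
    show ((gperm p n i (t (Sum.inl ⟨0, ha⟩)) : Fin n) : ℕ) = 0
    rw [gperm_apply_of_not (by omega)]
    exact hcorner
  obtain ⟨t', ht', τ, hτ⟩ := sort_tableau ha (t.trans (gperm p n i)) hs0
  have hact := polytabloid_act k ha t (gperm p n i)
  have hperm := polytabloid_perm k ha τ hτ
  refine ⟨t', ht', ?_, ?_⟩
  · rcases Int.units_eq_one_or (Equiv.Perm.sign τ) with hsg | hsg <;> rw [hsg] at hperm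
    · left
      rw [hact]
      simp only [Units.val_one, Int.cast_one, one_smul] at hperm
      exact congrArg MonoidAlgebra.ofCoeff hperm.symm
    · right
      rw [hact]
      simp only [Units.val_neg, Units.val_one, Int.cast_neg, Int.cast_one, neg_smul,
        one_smul] at hperm
      rw [hperm, neg_neg]
  · rw [hact, MonoidAlgebra.ofCoeff_inj]
    constructor
    · intro heq
      by_cases hrow : ∀ x : Fin n, (i - 1) * p ≤ (x : ℕ) → (x : ℕ) < i * p →
          ∃ j : Fin a, t (Sum.inl j) = x
      · exact Or.inl hrow
      right
      push_neg at hrow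
      obtain ⟨x, hx1, hx2, hx3⟩ := hrow
      obtain ⟨c, hc⟩ := t.surjective x
      have hxC : x ∈ Finset.image (hookCol ha t) Finset.univ := by
        rcases c with j | j
        · exact absurd hc (hx3 j)
        · exact Finset.mem_image.mpr ⟨j.succ, Finset.mem_univ _,
            by rw [hookCol_succ]; exact hc⟩
      have hsub : Finset.image (hookCol ha t) Finset.univ ⊆
          (Finset.image (hookCol ha t) Finset.univ).image (gperm p n i) := by
        intro z hz
        obtain ⟨w, -, hw⟩ := Finset.mem_image.mp hz
        rcases Fin.eq_zero_or_eq_succ w with rfl | ⟨j, rfl⟩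
        · have hz0 : (z : ℕ) = 0 := by
            rw [← hw, hookCol_zero]
            exact hcorner
          refine Finset.mem_image.mpr ⟨z, hz, ?_⟩
          rw [gperm_apply_of_not (by omega)]
        · have hsupp : ∃ σ', hookEmb ha (t.trans (gperm p n i)) σ' = hookEmb ha t 1 := by
            rw [← polytabloid_apply_ne_zero_iff k, heq, polytabloid_apply_ne_zero_iff k]
            exact ⟨1, rfl⟩
          obtain ⟨σ', hσ'⟩ := hsupp
          have h1 : hookEmb ha (t.trans (gperm p n i)) σ' j = hookEmb ha t 1 j := by
            rw [hσ']
          rw [hookEmb_apply, hookEmb_apply, hookCol_trans] at h1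
          have h2 : (1 : Equiv.Perm (Fin (b + 1))) j.succ = j.succ := rfl
          rw [h2, hw] at h1
          exact Finset.mem_image.mpr ⟨hookCol ha t (σ' j.succ),
            Finset.mem_image.mpr ⟨_, Finset.mem_univ _, rfl⟩, h1⟩
      have himg : (Finset.image (hookCol ha t) Finset.univ).image (gperm p n i)
          = Finset.image (hookCol ha t) Finset.univ :=
        (Finset.eq_of_subset_of_card_le hsub Finset.card_image_le).symm
      have hinv : ∀ z ∈ Finset.image (hookCol ha t) Finset.univ,
          gperm p n i z ∈ Finset.image (hookCol ha t) Finset.univ := by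
        intro z hz
        rw [← himg]
        exact Finset.mem_image_of_mem _ hz
      have hpowinv : ∀ (m : ℕ), ∀ z ∈ Finset.image (hookCol ha t) Finset.univ,
          ((gperm p n i) ^ m) z ∈ Finset.image (hookCol ha t) Finset.univ := by
        intro m
        induction m with
        | zero => intro z hz; simpa using hz
        | succ m ih =>
          intro z hz
          rw [pow_succ, Equiv.Perm.mul_apply]
          exact ih _ (hinv z hz)
      intro y hy1 hy2
      obtain ⟨m, hm⟩ := gperm_exists_pow hi1 hn0 hin ⟨hx1, hx2⟩ ⟨hy1, hy2⟩
      have hyC : y ∈ Finset.image (hookCol ha t) Finset.univ := by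
        rw [← hm]
        exact hpowinv m x hxC
      obtain ⟨w, -, hw⟩ := Finset.mem_image.mp hyC
      exact ⟨w, hw⟩
    · rintro (hrowc | hcolc)
      · refine polytabloid_congr k ha fun w => ?_
        rw [hookCol_trans]
        apply gperm_apply_of_not
        rintro ⟨hc1, hc2⟩
        rcases Fin.eq_zero_or_eq_succ w with rfl | ⟨j, rfl⟩
        · rw [hookCol_zero] at hc1
          omega
        · obtain ⟨j', hj'⟩ := hrowc _ hc1 hc2
          rw [hookCol_succ] at hj'
          exact absurd (t.injective hj') (by simp)
      · have hmem : ∀ w, ∃ w', hookCol ha t w' = hookCol ha (t.trans (gperm p n i)) w := by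
          intro w
          rw [hookCol_trans]
          by_cases hI : (i - 1) * p ≤ ((hookCol ha t w : Fin n) : ℕ) ∧
              ((hookCol ha t w : Fin n) : ℕ) < i * p
          · have hmem2 := gperm_mem hI
            exact hcolc _ hmem2.1 hmem2.2
          · rw [gperm_apply_of_not hI]
            exact ⟨w, rfl⟩
        choose f hf using hmem
        have hfinj : Function.Injective f := by
          intro w w' hww
          apply hookCol_injective ha (t.trans (gperm p n i))
          rw [← hf, ← hf, hww]
        have hfbij : Function.Bijective f := Finite.injective_iff_bijective.mp hfinj
        have hτ'prop : ∀ w, hookCol ha (t.trans (gperm p n i)) w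
            = hookCol ha t ((Equiv.ofBijective f hfbij) w) := fun w => (hf w).symm
        have hperm2 := polytabloid_perm k ha (Equiv.ofBijective f hfbij) hτ'prop
        have hkey : ∀ w, hookCol ha t ((Equiv.ofBijective f hfbij) w)
            = gperm p n i (hookCol ha t w) := by
          intro w
          rw [← hτ'prop, hookCol_trans]
        have hpowk : ∀ (m : ℕ) (w : Fin (b + 1)),
            hookCol ha t (((Equiv.ofBijective f hfbij) ^ m) w)
              = ((gperm p n i) ^ m) (hookCol ha t w) := by
          intro m
          induction m with
          | zero => intro w; simp
          | succ m ih =>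
            intro w
            rw [pow_succ, pow_succ, Equiv.Perm.mul_apply, Equiv.Perm.mul_apply,
              ih _, hkey w]
        have hτp : (Equiv.ofBijective f hfbij) ^ p = 1 := by
          apply Equiv.ext
          intro w
          have h5 := hpowk p w
          rw [gperm_pow hi1 hn0 hin] at h5
          simp only [Equiv.Perm.one_apply] at h5
          exact (hookCol_injective ha t h5).trans rfl
        rw [hperm2, sign_cast_eq_one hp k _ hτp, one_smul]
end
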